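/- Let A be a K-subalgebra of K[x] of codimension n > 1 with spectrum Sp(A) = {α_1, ..., α_s}. Then there exist an integer N > 1 and n K-linear maps L_1, ..., L_n : K[x] → K, each of the form L(f) = Σ_{i=0}^{N−1} Σ_{j=1}^{s} c_{ij} · f^(i)(α_j) for some constants c_{ij} ∈ K (where f^(0) = f), such that for every f ∈ K[x]: f ∈ A if and only if L_k(f) = 0 for all k = 1, ..., n. -/

import Mathlib

open Polynomial

/-- The spectrum of a subalgebra `A` of `K[x]`. -/
def subalgebraSpectrum {K : Type*} [Field K] (A : Subalgebra K (Polynomial K)) : Set K :=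
  {α | (∀ f ∈ A, (Polynomial.derivative f).eval α = 0) ∨
    ∃ β : K, β ≠ α ∧ ∀ f ∈ A, f.eval α = f.eval β}

section Aux

variable {K : Type*} [Field K]


lemma dvd_pow_iff_derivs [CharZero K] (p : K[X]) (a : K) (N : ℕ) :
    (X - C a) ^ N ∣ p ↔ ∀ i < N, ((derivative (R := K))^[i] p).eval a = 0 := by
  rcases eq_or_ne p 0 with rfl | hp
  · simp [dvd_zero]
  constructor
  · intro h i hi
    have hle : N ≤ p.rootMultiplicity a := (le_rootMultiplicity_iff hp).2 h
    exact isRoot_iterate_derivative_of_lt_rootMultiplicity (lt_of_lt_of_le hi hle)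
  · intro h
    cases N with
    | zero => simpa using one_dvd p
    | succ n =>
      have hlt : n < p.rootMultiplicity a := by
        apply lt_rootMultiplicity_of_isRoot_iterate_derivative_of_mem_nonZeroDivisors' hp
        · intro m hm
          exact h m (Nat.lt_succ_of_le hm)
        · intro m _ hm0
          exact mem_nonZeroDivisors_of_ne_zero (Nat.cast_ne_zero.2 hm0)
      exact (le_rootMultiplicity_iff hp).1 hlt

lemma aux_indep (β : K) : ∀ (m : ℕ) (lam : ℕ → K) (z : ℕ → K[X]),
    (∀ k < m, (z k).eval β ≠ 0) →
    ((X - C β) ^ m ∣ ∑ k ∈ Finset.range m, C (lam k) * ((X - C β) ^ k * z k)) →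
    ∀ k < m, lam k = 0 := by
  intro m
  induction m with
  | zero => intro lam z _ _ k hk; omega
  | succ n ih =>
    intro lam z hz hdvd
    have h0 : lam 0 = 0 := by
      have heval : (∑ k ∈ Finset.range (n+1), C (lam k) * ((X - C β) ^ k * z k)).eval β = 0 := by
        obtain ⟨t, ht⟩ := hdvd
        rw [ht]
        simp [eval_pow]
      rw [eval_finset_sum] at heval
      have heq : ∀ k ∈ Finset.range (n+1),
          (C (lam k) * ((X - C β) ^ k * z k)).eval β
            = if k = 0 then lam 0 * (z 0).eval β else 0 := by
        intro k hk
        rcases Nat.eq_zero_or_pos k with rfl | hkpos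
        · simp
        · simp only [eval_mul, eval_C, eval_pow, eval_sub, eval_X, eval_C, sub_self,
            zero_pow (Nat.pos_iff_ne_zero.1 hkpos), zero_mul, mul_zero]
          simp [Nat.pos_iff_ne_zero.1 hkpos]
      rw [Finset.sum_congr rfl heq, Finset.sum_ite_eq' (Finset.range (n+1)) 0] at heval
      simp only [Finset.mem_range, Nat.succ_pos, if_pos] at heval
      have := hz 0 (Nat.succ_pos n)
      exact (mul_eq_zero.1 heval).resolve_right this
    intro k hk
    rcases Nat.eq_zero_or_pos k with rfl | hkpos
    · exact h0
    -- reduce to ih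
    have hsum : (∑ k ∈ Finset.range (n+1), C (lam k) * ((X - C β) ^ k * z k))
        = (X - C β) * ∑ k ∈ Finset.range n, C (lam (k+1)) * ((X - C β) ^ k * z (k+1)) := by
      rw [Finset.sum_range_succ' (fun k => C (lam k) * ((X - C β) ^ k * z k)) n]
      rw [h0]
      simp only [map_zero, zero_mul, pow_zero, add_zero]
      rw [Finset.mul_sum]
      congr 1
      ext k
      ring
    rw [hsum, pow_succ'] at hdvd
    have hx : (X - C β) ≠ 0 := X_sub_C_ne_zero β
    have hdvd' : (X - C β) ^ n ∣ ∑ k ∈ Finset.range n, C (lam (k+1)) * ((X - C β) ^ k * z (k+1)) :=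
      (mul_dvd_mul_iff_left hx).1 hdvd
    have := ih (fun k => lam (k+1)) (fun k => z (k+1)) (fun k hk => hz (k+1) (by omega)) hdvd'
    have hk' := this (k-1) (by omega)
    have heq : k - 1 + 1 = k := by omega
    rwa [heq] at hk'


lemma exists_nonconstant_mem (A : Subalgebra K K[X])
    (hfin : FiniteDimensional K (K[X] ⧸ Subalgebra.toSubmodule A)) :
    ∃ p ∈ A, 1 ≤ p.natDegree := by
  classical
  set M := Subalgebra.toSubmodule A with hM
  set r := Module.finrank K (K[X] ⧸ M) with hr
  have hnli : ¬ LinearIndependent K (fun i : Fin (r+1) => M.mkQ (X ^ ((i:ℕ)+1))) := by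
    intro hli
    have := hli.fintype_card_le_finrank
    simp [Fintype.card_fin] at this
    omega
  rw [Fintype.not_linearIndependent_iff] at hnli
  obtain ⟨g, hgsum, i0, hgi0⟩ := hnli
  set p : K[X] := ∑ i : Fin (r+1), C (g i) * X ^ ((i:ℕ)+1) with hp
  have hpmem : p ∈ A := by
    have : M.mkQ p = 0 := by
      rw [hp, map_sum]
      rw [← hgsum]
      apply Finset.sum_congr rfl
      intro i _
      rw [← smul_eq_C_mul, map_smul]
    rwa [Submodule.mkQ_apply, Submodule.Quotient.mk_eq_zero] at this
  have hcoeff : p.coeff ((i0:ℕ)+1) = g i0 := by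
    rw [hp, finset_sum_coeff]
    rw [Finset.sum_eq_single i0]
    · simp [coeff_C_mul, coeff_X_pow]
    · intro i _ hne
      simp only [coeff_C_mul, coeff_X_pow]
      have : ¬ ((i0:ℕ)+1 = (i:ℕ)+1) := by
        intro h
        exact hne (Fin.ext (by omega))
      simp [this]
      intro h
      exact absurd (Fin.ext h.symm) hne
    · intro h; exact absurd (Finset.mem_univ i0) h
  refine ⟨p, hpmem, ?_⟩
  have : (i0:ℕ)+1 ≤ p.natDegree := le_natDegree_of_ne_zero (by rw [hcoeff]; exact hgi0)
  omega

lemma exists_conductor (A : Subalgebra K K[X])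
    (hfin : FiniteDimensional K (K[X] ⧸ Subalgebra.toSubmodule A)) :
    ∃ c : K[X], c ≠ 0 ∧ ∀ h : K[X], c * h ∈ A := by
  classical
  set M := Subalgebra.toSubmodule A with hM
  rcases subsingleton_or_nontrivial (K[X] ⧸ M) with hs | hnt
  · refine ⟨1, one_ne_zero, fun h => ?_⟩
    have : M.mkQ (1 * h) = 0 := Subsingleton.elim _ _
    rwa [Submodule.mkQ_apply, Submodule.Quotient.mk_eq_zero] at this
  obtain ⟨p, hpA, hpdeg⟩ := exists_nonconstant_mem A hfin
  have hp0 : p ≠ 0 := fun h => by simp [h] at hpdeg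
  have hle : M ≤ M.comap (LinearMap.mulLeft K p) := by
    intro a ha
    exact A.mul_mem hpA ha
  set μ : (K[X] ⧸ M) →ₗ[K] (K[X] ⧸ M) := Submodule.mapQ M M (LinearMap.mulLeft K p) hle with hμ
  have hpow : ∀ (i : ℕ) (f : K[X]), (μ ^ i) (M.mkQ f) = M.mkQ (p ^ i * f) := by
    intro i
    induction i with
    | zero => intro f; simp
    | succ i ih =>
      intro f
      rw [pow_succ', Module.End.mul_apply, ih f]
      have : μ (M.mkQ (p ^ i * f)) = M.mkQ (p * (p ^ i * f)) := by
        rw [hμ, Submodule.mkQ_apply, Submodule.mapQ_apply]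
        rfl
      rw [this]
      congr 1
      ring
  set nn := Module.finrank K ((K[X] ⧸ M) →ₗ[K] (K[X] ⧸ M)) with hnn
  have hnli : ¬ LinearIndependent K (fun i : Fin (nn+1) => μ ^ (i:ℕ)) := by
    intro hli
    have := hli.fintype_card_le_finrank
    simp [Fintype.card_fin] at this
    omega
  rw [Fintype.not_linearIndependent_iff] at hnli
  obtain ⟨g, hgsum, i1, hgi1⟩ := hnli
  -- some nonzero coefficient with positive index
  have hexpos : ∃ i : Fin (nn+1), 1 ≤ (i:ℕ) ∧ g i ≠ 0 := by
    by_contra hcon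
    push_neg at hcon
    obtain ⟨v, hv⟩ := exists_ne (0 : K[X] ⧸ M)
    have hi10 : (i1:ℕ) = 0 := by
      by_contra h
      exact hgi1 (hcon i1 (by omega))
    have happ := congrArg (fun (L : (K[X] ⧸ M) →ₗ[K] (K[X] ⧸ M)) => L v) hgsum
    simp only [LinearMap.sum_apply, LinearMap.smul_apply, LinearMap.zero_apply] at happ
    rw [Finset.sum_eq_single i1] at happ
    · rw [hi10] at happ
      simp only [pow_zero, Module.End.one_apply] at happ
      rcases smul_eq_zero.1 happ with h | h
      · exact hgi1 h
      · exact hv h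
    · intro i _ hne
      rcases Nat.eq_zero_or_pos (i:ℕ) with h0 | hpos
      · exact absurd (Fin.ext (by omega : (i:ℕ) = (i1:ℕ))) hne
      · rw [hcon i hpos]; simp
    · intro h; exact absurd (Finset.mem_univ i1) h
  obtain ⟨ipos, hipos, hgipos⟩ := hexpos
  set S : Finset (Fin (nn+1)) := Finset.univ.filter (fun i => g i ≠ 0) with hS
  have hSne : S.Nonempty := ⟨ipos, by simp [hS, hgipos]⟩
  set imax := S.max' hSne with himax
  have hgimax : g imax ≠ 0 := by
    have := S.max'_mem hSne
    simp [hS] at this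
    exact this
  have himaxpos : 1 ≤ (imax:ℕ) := by
    have : ipos ≤ imax := S.le_max' ipos (by simp [hS, hgipos])
    have := Fin.le_def.1 this
    omega
  set c : K[X] := ∑ i : Fin (nn+1), C (g i) * p ^ (i:ℕ) with hc
  have hdp : 1 ≤ p.natDegree := hpdeg
  have hlc : p.leadingCoeff ≠ 0 := leadingCoeff_ne_zero.2 hp0
  have hcoeff : c.coeff ((imax:ℕ) * p.natDegree) = g imax * p.leadingCoeff ^ (imax:ℕ) := by
    rw [hc, finset_sum_coeff]
    rw [Finset.sum_eq_single imax]
    · have hnd : (p ^ (imax:ℕ)).natDegree = (imax:ℕ) * p.natDegree :=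
        natDegree_pow' (pow_ne_zero _ hlc)
      rw [coeff_C_mul, ← hnd, coeff_natDegree, leadingCoeff_pow]
    · intro i _ hne
      rcases eq_or_ne (g i) 0 with h0 | h0
      · simp [h0]
      · have hiS : i ∈ S := by simp [hS, h0]
        have hile : i ≤ imax := S.le_max' i hiS
        have hilt : (i:ℕ) < (imax:ℕ) := by
          have := Fin.le_def.1 hile
          rcases lt_or_eq_of_le this with h | h
          · exact h
          · exact absurd (Fin.ext h) hne
        have hnd : (p ^ (i:ℕ)).natDegree = (i:ℕ) * p.natDegree :=
          natDegree_pow' (pow_ne_zero _ hlc)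
        rw [coeff_C_mul, coeff_eq_zero_of_natDegree_lt, mul_zero]
        rw [hnd]
        exact mul_lt_mul_of_pos_right hilt (by omega)
    · intro h; exact absurd (Finset.mem_univ imax) h
  have hc0 : c ≠ 0 := by
    intro h
    rw [h, coeff_zero] at hcoeff
    exact hgimax (by
      have := hcoeff.symm
      rcases mul_eq_zero.1 this with h' | h'
      · exact h'
      · exact absurd h' (pow_ne_zero _ hlc))
  refine ⟨c, hc0, fun h => ?_⟩
  have : M.mkQ (c * h) = 0 := by
    rw [hc, Finset.sum_mul, map_sum]
    have : ∀ i : Fin (nn+1), M.mkQ (C (g i) * p ^ (i:ℕ) * h) = g i • ((μ ^ (i:ℕ)) (M.mkQ h)) := by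
      intro i
      rw [hpow]
      rw [mul_assoc, ← smul_eq_C_mul, map_smul]
    rw [Finset.sum_congr rfl (fun i _ => this i)]
    have := congrArg (fun (L : (K[X] ⧸ M) →ₗ[K] (K[X] ⧸ M)) => L (M.mkQ h)) hgsum
    simp only [LinearMap.sum_apply, LinearMap.smul_apply, LinearMap.zero_apply] at this
    exact this
  rwa [Submodule.mkQ_apply, Submodule.Quotient.mk_eq_zero] at this


lemma C_mem (A : Subalgebra K K[X]) (a : K) : C a ∈ A := by
  have := A.algebraMap_mem a
  rwa [Polynomial.algebraMap_eq] at this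

lemma exists_G [IsAlgClosed K] (A : Subalgebra K K[X]) {q : K[X]} (hq : q ≠ 0) {β : K}
    (hqβ : q.eval β ≠ 0)
    (hsep : ∀ γ : K, γ ≠ β → ∃ g ∈ A, g.eval β ≠ g.eval γ) :
    ∃ G ∈ A, q ∣ G ∧ G.eval β ≠ 0 := by
  classical
  have hroots : ∀ γ ∈ q.roots.toFinset, γ ≠ β := by
    intro γ hγ h
    rw [Multiset.mem_toFinset, mem_roots hq] at hγ
    rw [h] at hγ
    exact hqβ hγ
  have H : ∀ γ ∈ q.roots.toFinset, ∃ g, g ∈ A ∧ g.eval β ≠ g.eval γ := by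
    intro γ hγ
    obtain ⟨g, hgA, hgne⟩ := hsep γ (hroots γ hγ)
    exact ⟨g, hgA, hgne⟩
  set gg : K → K[X] := fun γ => if h : γ ∈ q.roots.toFinset then (H γ h).choose else 1 with hgg
  have hggP : ∀ γ ∈ q.roots.toFinset, gg γ ∈ A ∧ (gg γ).eval β ≠ (gg γ).eval γ := by
    intro γ h
    rw [hgg]
    simp only [dif_pos h]
    exact (H γ h).choose_spec
  set G : K[X] := ∏ γ ∈ q.roots.toFinset, (gg γ - C ((gg γ).eval γ)) ^ (q.rootMultiplicity γ)
    with hG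
  have hGA : G ∈ A := by
    apply Subalgebra.prod_mem
    intro γ hγ
    exact pow_mem (A.sub_mem (hggP γ hγ).1 (C_mem A _)) _
  have hq' : q = C q.leadingCoeff *
      ∏ γ ∈ q.roots.toFinset, (X - C γ) ^ (q.rootMultiplicity γ) := by
    conv_lhs => rw [(IsAlgClosed.splits q).eq_prod_roots]
    congr 1
    rw [Finset.prod_multiset_map_count]
    apply Finset.prod_congr rfl
    intro γ _
    rw [count_roots]
  have hPdvd : (∏ γ ∈ q.roots.toFinset, (X - C γ) ^ (q.rootMultiplicity γ)) ∣ G := by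
    apply Finset.prod_dvd_of_coprime
    · intro a ha b hb hab
      exact (Polynomial.pairwise_coprime_X_sub_C (Function.injective_id) hab).pow
    · intro γ hγ
      refine dvd_trans (pow_dvd_pow_of_dvd ?_ _) (Finset.dvd_prod_of_mem _ hγ)
      rw [dvd_iff_isRoot]
      simp [IsRoot]
  have hqG : q ∣ G := by
    rw [hq']
    have hu : IsUnit (C q.leadingCoeff) :=
      isUnit_C.2 (isUnit_iff_ne_zero.2 (leadingCoeff_ne_zero.2 hq))
    exact (IsUnit.mul_left_dvd hu).2 hPdvd
  refine ⟨G, hGA, hqG, ?_⟩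
  rw [hG, eval_prod]
  apply Finset.prod_ne_zero_iff.2
  intro γ hγ
  simp only [eval_pow, eval_sub, eval_C]
  exact pow_ne_zero _ (sub_ne_zero.2 (hggP γ hγ).2)

lemma conductor_reduce [IsAlgClosed K] [CharZero K] (A : Subalgebra K K[X])
    {c : K[X]} (hc0 : c ≠ 0) (hcA : ∀ h : K[X], c * h ∈ A) {β : K}
    (hroot : c.eval β = 0) (hβ : β ∉ subalgebraSpectrum A) :
    ∃ q : K[X], q ≠ 0 ∧ (∀ h : K[X], q * h ∈ A) ∧ q.natDegree < c.natDegree := by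
  classical
  simp only [subalgebraSpectrum, Set.mem_setOf_eq, not_or, not_exists, not_forall] at hβ
  obtain ⟨hβ1, hβ2⟩ := hβ
  obtain ⟨f, hfA, hf'⟩ : ∃ f, f ∈ A ∧ (derivative f).eval β ≠ 0 := by
    obtain ⟨f, hf⟩ := hβ1
    obtain ⟨hfA, hne⟩ := hf
    exact ⟨f, hfA, hne⟩
  have hsep : ∀ γ : K, γ ≠ β → ∃ g ∈ A, g.eval β ≠ g.eval γ := by
    intro γ hγ
    have := hβ2 γ
    push_neg at this
    obtain ⟨g, hgA, hgne⟩ := this hγ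
    exact ⟨g, hgA, hgne⟩
  set m := c.rootMultiplicity β with hm
  have hm1 : 1 ≤ m := (rootMultiplicity_pos hc0).2 hroot
  set q : K[X] := c /ₘ (X - C β) ^ m with hqdef
  have hfact : (X - C β) ^ m * q = c := pow_mul_divByMonic_rootMultiplicity_eq c β
  have hq0 : q ≠ 0 := by
    intro h
    rw [h, mul_zero] at hfact
    exact hc0 hfact.symm
  have hqβ : q.eval β ≠ 0 := eval_divByMonic_pow_rootMultiplicity_ne_zero β hc0
  have hdeg : q.natDegree < c.natDegree := by
    have hXm : ((X - C β) ^ m).natDegree = m := by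
      rw [natDegree_pow' (by simp [leadingCoeff_X_sub_C]), natDegree_X_sub_C, mul_one]
    have := congrArg natDegree hfact
    rw [natDegree_mul (pow_ne_zero _ (X_sub_C_ne_zero β)) hq0, hXm] at this
    omega
  obtain ⟨G, hGA, hqG, hGβ⟩ := exists_G A hq0 hqβ hsep
  obtain ⟨Gq, hGq⟩ := hqG
  have hGqβ : Gq.eval β ≠ 0 := by
    intro h
    apply hGβ
    rw [hGq, eval_mul, h, mul_zero]
  set u : K[X] := (f - C (f.eval β)) * G with hu
  have huA : u ∈ A := A.mul_mem (A.sub_mem hfA (C_mem A _)) hGA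
  have huroot : (X - C β) ∣ u := by
    rw [dvd_iff_isRoot]
    simp [IsRoot, hu]
  obtain ⟨u0, hu0⟩ := huroot
  have hu0β : u0.eval β ≠ 0 := by
    have hder : (derivative u).eval β = u0.eval β := by
      rw [hu0, derivative_mul]
      simp [derivative_X_sub_C]
    have hder2 : (derivative u).eval β = (derivative f).eval β * G.eval β := by
      rw [hu, derivative_mul]
      simp [derivative_C]
    rw [hder2] at hder
    rw [← hder]
    exact mul_ne_zero hf' hGβ
  set z : ℕ → K[X] := fun k => u0 ^ k * Gq with hz
  have hzβ : ∀ k, (z k).eval β ≠ 0 := by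
    intro k
    rw [hz]
    simp only [eval_mul, eval_pow]
    exact mul_ne_zero (pow_ne_zero _ hu0β) hGqβ
  set wp : Fin m → K[X] := fun j => (X - C β) ^ (j : ℕ) * z (j : ℕ) with hwp
  set S : (Fin m → K) →ₗ[K] K[X] :=
    ∑ j : Fin m, LinearMap.smulRight (LinearMap.proj j) (wp j) with hS
  have hSapp : ∀ lam : Fin m → K, S lam = ∑ j : Fin m, lam j • wp j := by
    intro lam
    rw [hS]
    simp [LinearMap.sum_apply, LinearMap.smulRight_apply]
  set T' : K[X] →ₗ[K] (Fin m → K) :=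
    LinearMap.pi (fun k : Fin m =>
      (Polynomial.leval β).comp ((derivative : K[X] →ₗ[K] K[X]) ^ (k : ℕ))) with hT'
  have hT'app : ∀ (p : K[X]) (k : Fin m),
      T' p k = ((derivative (R := K))^[(k : ℕ)] p).eval β := by
    intro p k
    rw [hT']
    simp [LinearMap.pi_apply, Polynomial.leval_apply, Module.End.pow_apply]
  have hdvdT' : ∀ p : K[X], T' p = 0 → (X - C β) ^ m ∣ p := by
    intro p hp
    rw [dvd_pow_iff_derivs]
    intro i hi
    have := congrFun hp ⟨i, hi⟩
    rw [hT'app] at this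
    simpa using this
  have hinj : Function.Injective (T'.comp S) := by
    rw [← LinearMap.ker_eq_bot]
    rw [Submodule.eq_bot_iff]
    intro lam hlam
    rw [LinearMap.mem_ker, LinearMap.comp_apply] at hlam
    have hdvd : (X - C β) ^ m ∣ S lam := hdvdT' _ hlam
    set lamn : ℕ → K := fun i => if h : i < m then lam ⟨i, h⟩ else 0 with hlamn
    have hrw : S lam = ∑ k ∈ Finset.range m, C (lamn k) * ((X - C β) ^ k * z k) := by
      rw [hSapp]
      rw [← Fin.sum_univ_eq_sum_range (fun k => C (lamn k) * ((X - C β) ^ k * z k)) m]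
      apply Finset.sum_congr rfl
      intro j _
      rw [hlamn]
      simp only [Fin.is_lt, dif_pos, Fin.eta]
      rw [smul_eq_C_mul, hwp]
    rw [hrw] at hdvd
    have := aux_indep β m lamn z (fun k _ => hzβ k) hdvd
    funext j
    have hj := this (j : ℕ) j.is_lt
    rw [hlamn] at hj
    simpa [Fin.is_lt, dif_pos, Fin.eta] using hj
  have hsurj : Function.Surjective (T'.comp S) :=
    (LinearMap.injective_iff_surjective).1 hinj
  refine ⟨q, hq0, ?_, hdeg⟩
  intro h
  obtain ⟨lam, hlam⟩ := hsurj (T' h)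
  have hzero : T' (h - S lam) = 0 := by
    rw [map_sub]
    rw [LinearMap.comp_apply] at hlam
    rw [hlam, sub_self]
  obtain ⟨t, ht⟩ := hdvdT' _ hzero
  have hh : h = S lam + (X - C β) ^ m * t := by
    rw [← ht]; ring
  have hqS : q * S lam ∈ A := by
    rw [hSapp, Finset.mul_sum]
    apply Subalgebra.sum_mem
    intro j _
    rw [mul_smul_comm]
    apply Subalgebra.smul_mem
    have heq : q * wp j = u ^ (j : ℕ) * G := by
      rw [hwp, hz, hu0, hGq, mul_pow]
      ring
    rw [heq]
    exact A.mul_mem (pow_mem huA _) hGA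
  have : q * h = q * S lam + c * t := by
    rw [hh, mul_add]
    congr 1
    rw [← hfact]
    ring
  rw [this]
  exact A.add_mem hqS (hcA t)

lemma factor_form [IsAlgClosed K] [DecidableEq K] {q : K[X]} (hq : q ≠ 0) :
    q = C q.leadingCoeff * ∏ γ ∈ q.roots.toFinset, (X - C γ) ^ (q.rootMultiplicity γ) := by
  classical
  conv_lhs => rw [(IsAlgClosed.splits q).eq_prod_roots]
  congr 1
  rw [Finset.prod_multiset_map_count]
  apply Finset.prod_congr rfl
  intro γ _
  rw [count_roots]

lemma exists_good_conductor [IsAlgClosed K] [CharZero K] (A : Subalgebra K K[X])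
    (hfin : FiniteDimensional K (K[X] ⧸ Subalgebra.toSubmodule A)) :
    ∃ c : K[X], c ≠ 0 ∧ (∀ h : K[X], c * h ∈ A) ∧
      ∀ β : K, c.eval β = 0 → β ∈ subalgebraSpectrum A := by
  classical
  have hex : ∃ d : ℕ, ∃ c : K[X], (c ≠ 0 ∧ ∀ h : K[X], c * h ∈ A) ∧ c.natDegree = d := by
    obtain ⟨c, hc0, hcA⟩ := exists_conductor A hfin
    exact ⟨c.natDegree, c, ⟨hc0, hcA⟩, rfl⟩
  obtain ⟨c, ⟨hc0, hcA⟩, hcd⟩ := Nat.find_spec hex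
  refine ⟨c, hc0, hcA, ?_⟩
  intro β hβ
  by_contra hnot
  obtain ⟨q, hq0, hqA, hqdeg⟩ := conductor_reduce A hc0 hcA hβ hnot
  have hlt : q.natDegree < Nat.find hex := by omega
  exact Nat.find_min hex hlt ⟨q, ⟨hq0, hqA⟩, rfl⟩

end Aux

theorem subalgebra_described_by_derivative_conditions
    {K : Type*} [Field K] [IsAlgClosed K] [CharZero K]
    (A : Subalgebra K (Polynomial K)) (n : ℕ) (hn : 1 < n)
    (hfin : FiniteDimensional K (Polynomial K ⧸ Subalgebra.toSubmodule A))
    (hcodim : Module.finrank K (Polynomial K ⧸ Subalgebra.toSubmodule A) = n)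
    (s : ℕ) (α : Fin s → K) (hinj : Function.Injective α)
    (hSp : subalgebraSpectrum A = Set.range α) :
    ∃ N : ℕ, 1 < N ∧ ∃ c : Fin n → Fin N → Fin s → K,
      ∀ f : Polynomial K, f ∈ A ↔
        ∀ k : Fin n,
          ∑ i : Fin N, ∑ j : Fin s,
            c k i j * ((Polynomial.derivative)^[(i : ℕ)] f).eval (α j) = 0 := by
  classical
  obtain ⟨c0, hc00, hcA, hcroots0⟩ := exists_good_conductor A hfin
  have hcroots : ∀ β : K, c0.eval β = 0 → β ∈ Set.range α := by
    intro β hβ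
    rw [← hSp]
    exact hcroots0 β hβ
  haveI := hfin
  set M := Subalgebra.toSubmodule A with hM
  set N := max c0.natDegree 2 with hN
  have hN1 : 1 < N := lt_of_lt_of_le one_lt_two (le_max_right _ _)
  set d' : K[X] := ∏ j : Fin s, (X - C (α j)) ^ N with hd'
  have hcd : c0 ∣ d' := by
    rw [factor_form hc00]
    have hu : IsUnit (C c0.leadingCoeff) :=
      isUnit_C.2 (isUnit_iff_ne_zero.2 (leadingCoeff_ne_zero.2 hc00))
    rw [IsUnit.mul_left_dvd hu]
    apply Finset.prod_dvd_of_coprime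
    · intro a ha b hb hab
      exact (Polynomial.pairwise_coprime_X_sub_C (Function.injective_id) hab).pow
    · intro γ hγ
      have hγroot : c0.eval γ = 0 := by
        rw [Multiset.mem_toFinset, mem_roots hc00] at hγ
        exact hγ
      obtain ⟨j, hj⟩ := hcroots γ hγroot
      have hrm : c0.rootMultiplicity γ ≤ N := by
        have hdvd := c0.pow_rootMultiplicity_dvd γ
        have := natDegree_le_of_dvd hdvd hc00
        rw [natDegree_pow' (by simp [leadingCoeff_X_sub_C]), natDegree_X_sub_C, mul_one] at this
        exact le_trans this (le_max_left _ _)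
      calc (X - C γ) ^ c0.rootMultiplicity γ ∣ (X - C (α j)) ^ N := by
            rw [hj]; exact pow_dvd_pow _ hrm
        _ ∣ d' := Finset.dvd_prod_of_mem _ (Finset.mem_univ j)
  have hd'A : ∀ h : K[X], d' * h ∈ A := by
    obtain ⟨e, he⟩ := hcd
    intro h
    rw [he, mul_assoc]
    exact hcA _
  set T : K[X] →ₗ[K] (Fin N × Fin s → K) :=
    LinearMap.pi (fun p : Fin N × Fin s =>
      (Polynomial.leval (α p.2)).comp ((derivative : K[X] →ₗ[K] K[X]) ^ (p.1 : ℕ))) with hT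
  have hTapp : ∀ (f : K[X]) (p : Fin N × Fin s),
      T f p = ((derivative (R := K))^[(p.1 : ℕ)] f).eval (α p.2) := by
    intro f p
    rw [hT]
    simp [LinearMap.pi_apply, Polynomial.leval_apply, Module.End.pow_apply]
  have hker : ∀ f : K[X], T f = 0 → f ∈ M := by
    intro f hf
    have hdvd : ∀ j : Fin s, (X - C (α j)) ^ N ∣ f := by
      intro j
      rw [dvd_pow_iff_derivs]
      intro i hi
      have := congrFun hf (⟨i, hi⟩, j)
      rw [hTapp] at this
      simpa using this
    have hd'dvd : d' ∣ f := by
      apply Finset.prod_dvd_of_coprime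
      · intro a ha b hb hab
        have : α a ≠ α b := fun h => hab (hinj h)
        exact (Polynomial.pairwise_coprime_X_sub_C hinj hab).pow
      · intro j _
        exact hdvd j
    obtain ⟨t, ht⟩ := hd'dvd
    rw [ht]
    exact hd'A t
  set P := LinearMap.range T with hP
  obtain ⟨σ, hσ⟩ := T.rangeRestrict.exists_rightInverse_of_surjective
    (LinearMap.range_rangeRestrict T)
  obtain ⟨Pc, hPc⟩ := P.exists_isCompl
  set π : (Fin N × Fin s → K) →ₗ[K] P := Submodule.projectionOnto P Pc hPc with hπ
  set b : Module.Basis (Fin n) K (K[X] ⧸ M) := Module.finBasisOfFinrankEq K _ hcodim with hb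
  set L : Fin n → ((Fin N × Fin s → K) →ₗ[K] K) :=
    fun k => (b.coord k).comp ((M.mkQ.comp σ).comp π) with hL
  have hLT : ∀ (f : K[X]) (k : Fin n), L k (T f) = b.coord k (M.mkQ f) := by
    intro f k
    have h1 : T f = ((T.rangeRestrict f : P) : Fin N × Fin s → K) := rfl
    have h2 : π (T f) = T.rangeRestrict f := by
      rw [h1, hπ]
      exact Submodule.projectionOnto_apply_left hPc _
    have h3 : T.rangeRestrict (σ (T.rangeRestrict f)) = T.rangeRestrict f := by
      have := congrArg (fun (L : P →ₗ[K] P) => L (T.rangeRestrict f)) hσ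
      exact this
    have h4 : T (σ (T.rangeRestrict f)) = T f := by
      have := congrArg (fun (v : P) => (v : Fin N × Fin s → K)) h3
      simpa [← h1] using this
    have h5 : σ (T.rangeRestrict f) - f ∈ M := by
      apply hker
      rw [map_sub, h4, sub_self]
    have h6 : M.mkQ (σ (T.rangeRestrict f)) = M.mkQ f := by
      rw [Submodule.mkQ_apply, Submodule.mkQ_apply]
      exact (Submodule.Quotient.eq M).2 h5
    rw [hL]
    simp only [LinearMap.comp_apply]
    rw [h2, h6]
  refine ⟨N, hN1, fun k i j => L k (fun p => if (i, j) = p then 1 else 0), fun f => ?_⟩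
  have hsum : ∀ k : Fin n,
      (∑ i : Fin N, ∑ j : Fin s,
        L k (fun p => if (i, j) = p then 1 else 0)
          * ((derivative (R := K))^[(i : ℕ)] f).eval (α j)) = L k (T f) := by
    intro k
    rw [LinearMap.pi_apply_eq_sum_univ (L k) (T f), Fintype.sum_prod_type]
    apply Finset.sum_congr rfl
    intro i _
    apply Finset.sum_congr rfl
    intro j _
    rw [hTapp]
    rw [smul_eq_mul, mul_comm]
  constructor
  · intro hfA k
    rw [hsum k, hLT]
    have : M.mkQ f = 0 := by
      rw [Submodule.mkQ_apply, Submodule.Quotient.mk_eq_zero]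
      exact hfA
    rw [this, map_zero]
  · intro hf
    have hcoord : ∀ k : Fin n, b.coord k (M.mkQ f) = 0 := by
      intro k
      rw [← hLT, ← hsum k]
      exact hf k
    have : M.mkQ f = 0 := b.forall_coord_eq_zero_iff.1 hcoord
    rwa [Submodule.mkQ_apply, Submodule.Quotient.mk_eq_zero] at this
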